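/- For any square-integrable random variable Y and conditioning random variables B, A (with A ∈ {0,1}) and Z*, the OFF predictor f_OFF, which equals E[Y | B] on the event {A=0} and E[Y | B, A, Z*] on the event {A=1}, satisfies E[(Y - E[Y|B])^2] ≥ E[(Y - f_OFF)^2]. That is, Optional Feature Fairness obeys Predictive Non-Degradation. -/

import Mathlib

open MeasureTheory

private lemma memℒp_condexp_two {Ω : Type*} {mΩ : MeasurableSpace Ω} {μ : Measure Ω}
    [IsFiniteMeasure μ] {m : MeasurableSpace Ω} (hm : m ≤ mΩ) [SigmaFinite (μ.trim hm)]
    {f : Ω → ℝ} (hf : MemLp f 2 μ) : MemLp (μ[f|m]) 2 μ := by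
  have hint : Integrable f μ := hf.integrable one_le_two
  have hff : ((condExpL2 ℝ ℝ hm (hf.toLp f) : Ω →₂[μ] ℝ) : Ω → ℝ) =ᵐ[μ] μ[f|m] := by
    refine ae_eq_condExp_of_forall_setIntegral_eq hm hint
      (fun s hs hμs => integrableOn_condExpL2_of_measure_ne_top hm hμs.ne _)
      (fun s hs hμs => ?_) (lpMeas.aestronglyMeasurable _)
    rw [integral_condExpL2_eq hm (hf.toLp f) hs hμs.ne]
    exact integral_congr_ae (ae_restrict_of_ae hf.coeFn_toLp)
  exact (Lp.memLp _).ae_eq hff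

private lemma l2_orth {Ω : Type*} {mΩ : MeasurableSpace Ω} {μ : Measure Ω}
    [IsProbabilityMeasure μ] {m : MeasurableSpace Ω} (hm : m ≤ mΩ)
    {Y g : Ω → ℝ} (hY : MemLp Y 2 μ) (hgm : StronglyMeasurable[m] g)
    (hg : MemLp g 2 μ) :
    ∫ ω, (Y ω - g ω) ^ 2 ∂μ
      = ∫ ω, (Y ω - (μ[Y|m]) ω) ^ 2 ∂μ + ∫ ω, ((μ[Y|m]) ω - g ω) ^ 2 ∂μ := by
  haveI : SigmaFinite (μ.trim hm) := by infer_instance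
  set E : Ω → ℝ := μ[Y|m] with hE
  have hYint : Integrable Y μ := hY.integrable one_le_two
  have hE2 : MemLp E 2 μ := memℒp_condexp_two hm hY
  have hYE : MemLp (fun ω => Y ω - E ω) 2 μ := hY.sub hE2
  have hEg : MemLp (fun ω => E ω - g ω) 2 μ := hE2.sub hg
  have hsq1 : Integrable (fun ω => (Y ω - E ω) ^ 2) μ := hYE.integrable_sq
  have hsq2 : Integrable (fun ω => (E ω - g ω) ^ 2) μ := hEg.integrable_sq
  have hcross : Integrable (fun ω => (E ω - g ω) * (Y ω - E ω)) μ := by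
    refine (hsq2.add hsq1).mono' (hEg.aestronglyMeasurable.mul hYE.aestronglyMeasurable) ?_
    filter_upwards with ω
    simp only [Pi.add_apply]
    rw [Real.norm_eq_abs, abs_mul]
    nlinarith [sq_nonneg (|E ω - g ω| - |Y ω - E ω|), sq_abs (E ω - g ω),
      sq_abs (Y ω - E ω), abs_nonneg (E ω - g ω), abs_nonneg (Y ω - E ω),
      mul_nonneg (abs_nonneg (E ω - g ω)) (abs_nonneg (Y ω - E ω))]
  have hz : μ[(fun ω => Y ω - E ω)|m] =ᵐ[μ] 0 := by
    have h1 : μ[Y - E|m] =ᵐ[μ] μ[Y|m] - μ[E|m] := condExp_sub hYint integrable_condExp m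
    have h2 : μ[E|m] = E :=
      condExp_of_stronglyMeasurable hm stronglyMeasurable_condExp integrable_condExp
    have : (fun ω => Y ω - E ω) = Y - E := rfl
    rw [this]
    refine h1.trans ?_
    rw [h2, ← hE, sub_self]
  have hcz : ∫ ω, (E ω - g ω) * (Y ω - E ω) ∂μ = 0 := by
    have hpull : μ[(fun ω => (E ω - g ω) * (Y ω - E ω))|m]
        =ᵐ[μ] (fun ω => E ω - g ω) * μ[(fun ω => Y ω - E ω)|m] := by
      have := condExp_mul_of_stronglyMeasurable_left (μ := μ) (m := m)
        (f := fun ω => E ω - g ω) (g := fun ω => Y ω - E ω)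
        (stronglyMeasurable_condExp.sub hgm) hcross (hYint.sub integrable_condExp)
      exact this
    have hzero : μ[(fun ω => (E ω - g ω) * (Y ω - E ω))|m] =ᵐ[μ] 0 := by
      refine hpull.trans ?_
      filter_upwards [hz] with ω h
      simp [h]
    rw [← integral_condExp (μ := μ) (f := fun ω => (E ω - g ω) * (Y ω - E ω)) hm,
      integral_congr_ae hzero]
    simp
  have key : ∫ ω, (Y ω - g ω) ^ 2 ∂μ
      = ∫ ω, ((Y ω - E ω) ^ 2 + ((E ω - g ω) ^ 2 + 2 * ((E ω - g ω) * (Y ω - E ω)))) ∂μ := by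
    refine integral_congr_ae (Filter.Eventually.of_forall fun ω => ?_)
    ring
  have hI2 : Integrable (fun ω => 2 * ((E ω - g ω) * (Y ω - E ω))) μ := hcross.const_mul 2
  have hI3 : Integrable (fun ω => (E ω - g ω) ^ 2 + 2 * ((E ω - g ω) * (Y ω - E ω))) μ :=
    hsq2.add hI2
  rw [key, integral_add hsq1 hI3, integral_add hsq2 hI2, integral_const_mul, hcz]
  ring

/-- the OFF predictor (`E[Y|B]` on `{A=0}`, `E[Y|B,A,Z*]` on `{A=1}`) obeys
Predictive Non-Degradation: its MSE is at most that of the base model `E[Y|B]`. -/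
theorem off_predictive_non_degradation
    {Ω β γ : Type*} {mΩ : MeasurableSpace Ω} {mβ : MeasurableSpace β}
    {mγ : MeasurableSpace γ}
    (μ : Measure Ω) [IsProbabilityMeasure μ]
    (Y : Ω → ℝ) (B : Ω → β) (A : Ω → ℝ) (Z : Ω → γ)
    (hB : Measurable B) (hA : Measurable A) (hZ : Measurable Z)
    (hA01 : ∀ ω, A ω = 0 ∨ A ω = 1)
    (hY : MemLp Y 2 μ)
    (m0 m1 : MeasurableSpace Ω)
    (hm0 : m0 = MeasurableSpace.comap B mβ)
    (hm1 : m1 = MeasurableSpace.comap B mβ ⊔ MeasurableSpace.comap A inferInstance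
                  ⊔ MeasurableSpace.comap Z mγ)
    (fOFF : Ω → ℝ)
    (hfOFF : fOFF = fun ω => if A ω = 0 then (μ[Y | m0]) ω else (μ[Y | m1]) ω) :
    ∫ ω, (Y ω - (μ[Y | m0]) ω) ^ 2 ∂μ ≥ ∫ ω, (Y ω - fOFF ω) ^ 2 ∂μ := by
  have hm0le : m0 ≤ mΩ := by rw [hm0]; exact hB.comap_le
  have hm1le : m1 ≤ mΩ := by
    rw [hm1]
    exact sup_le (sup_le hB.comap_le hA.comap_le) hZ.comap_le
  have hm01 : m0 ≤ m1 := by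
    rw [hm0, hm1]; exact le_trans le_sup_left le_sup_left
  haveI : SigmaFinite (μ.trim hm0le) := by infer_instance
  haveI : SigmaFinite (μ.trim hm1le) := by infer_instance
  set E0 : Ω → ℝ := μ[Y|m0] with hE0
  set E1 : Ω → ℝ := μ[Y|m1] with hE1
  have hE0m1 : StronglyMeasurable[m1] E0 := stronglyMeasurable_condExp.mono hm01
  have hE0₂ : MemLp E0 2 μ := memℒp_condexp_two hm0le hY
  have hE1₂ : MemLp E1 2 μ := memℒp_condexp_two hm1le hY
  have hAset : MeasurableSet[m1] {ω | A ω = 0} := by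
    have hle : MeasurableSpace.comap A inferInstance ≤ m1 := by
      rw [hm1]; exact le_trans le_sup_right le_sup_left
    exact hle _ ⟨{0}, measurableSet_singleton 0, rfl⟩
  have hfm : StronglyMeasurable[m1] fOFF := by
    rw [hfOFF]
    exact StronglyMeasurable.ite hAset hE0m1 stronglyMeasurable_condExp
  have hf2 : MemLp fOFF 2 μ := by
    refine MemLp.mono (hE0₂.norm.add hE1₂.norm)
      (hfm.mono hm1le).aestronglyMeasurable ?_
    filter_upwards with ω
    have h0 : (0:ℝ) ≤ |E0 ω| := abs_nonneg _
    have h1 : (0:ℝ) ≤ |E1 ω| := abs_nonneg _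
    rw [hfOFF]
    simp only [Pi.add_apply, Real.norm_eq_abs]
    rw [abs_of_nonneg (by linarith : (0:ℝ) ≤ |E0 ω| + |E1 ω|)]
    by_cases h : A ω = 0
    · simp only [h, if_true]; linarith
    · simp only [h, if_false]; linarith
  have eq0 : ∫ ω, (Y ω - E0 ω) ^ 2 ∂μ
      = ∫ ω, (Y ω - E1 ω) ^ 2 ∂μ + ∫ ω, (E1 ω - E0 ω) ^ 2 ∂μ :=
    l2_orth hm1le hY hE0m1 hE0₂
  have eqf : ∫ ω, (Y ω - fOFF ω) ^ 2 ∂μ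
      = ∫ ω, (Y ω - E1 ω) ^ 2 ∂μ + ∫ ω, (E1 ω - fOFF ω) ^ 2 ∂μ :=
    l2_orth hm1le hY hfm hf2
  have hmono : ∫ ω, (E1 ω - fOFF ω) ^ 2 ∂μ ≤ ∫ ω, (E1 ω - E0 ω) ^ 2 ∂μ := by
    refine integral_mono ((hE1₂.sub hf2).integrable_sq) ((hE1₂.sub hE0₂).integrable_sq) ?_
    intro ω
    show (E1 ω - fOFF ω) ^ 2 ≤ (E1 ω - E0 ω) ^ 2
    rcases hA01 ω with h | h
    · have hf : fOFF ω = E0 ω := by rw [hfOFF]; simp [h]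
      rw [hf]
    · have hf : fOFF ω = E1 ω := by rw [hfOFF]; simp [h]
      rw [hf, sub_self]
      simpa using sq_nonneg (E1 ω - E0 ω)
  rw [ge_iff_le, eqf, eq0]
  exact add_le_add le_rfl hmono
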